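/- Let U, V ⊆ ℝ^n be open connected sets with U ∪ V = ℝ^n. Then U ∩ V is connected. -/

import Mathlib

open Complex Metric Set Real Filter Finset Topology


-- separation of the lattice 2πiℤ
lemma sep_lemma {a b : ℂ} (ha : Complex.exp a = 1) (hb : Complex.exp b = 1)
    (hd : dist a b < 1) : a = b := by
  rw [Complex.exp_eq_one_iff] at ha hb
  obtain ⟨k, rfl⟩ := ha
  obtain ⟨m, rfl⟩ := hb
  by_contra h
  have hkm : k ≠ m := by rintro rfl; exact h rfl
  have h1 : (1 : ℝ) ≤ |(k : ℝ) - m| := by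
    have : (1:ℤ) ≤ |k - m| := Int.one_le_abs (sub_ne_zero.mpr hkm)
    calc (1:ℝ) ≤ ((|k - m| : ℤ) : ℝ) := by exact_mod_cast this
    _ = |(k : ℝ) - m| := by push_cast [Int.cast_abs]; ring_nf
  have hdist : dist ((k:ℂ) * (2 * π * I)) ((m:ℂ) * (2 * π * I))
      = |(k:ℝ) - m| * (2 * π) := by
    rw [Complex.dist_eq]
    rw [show (k:ℂ) * (2 * π * I) - (m:ℂ) * (2 * π * I) = ((k:ℂ) - m) * (2 * π * I) by ring]
    simp only [norm_mul, Complex.norm_I, Complex.norm_two, Complex.norm_real, Real.norm_eq_abs, mul_one]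
    rw [show ((k:ℂ) - m) = (((k:ℝ) - m : ℝ) : ℂ) by push_cast; ring]
    rw [Complex.norm_real, Real.norm_eq_abs, abs_of_pos Real.pi_pos]
  rw [hdist] at hd
  nlinarith [Real.pi_gt_three]

-- constancy of continuous functions with values in 2πiℤ on preconnected sets
lemma const_of_exp_eq_one {E : Type*} [TopologicalSpace E] {s : Set E}
    (hs : IsPreconnected s) {g : E → ℂ} (hg : ContinuousOn g s)
    (h1 : ∀ x ∈ s, Complex.exp (g x) = 1) :
    ∀ x ∈ s, ∀ y ∈ s, g x = g y := by
  intro x hx y hy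
  haveI : PreconnectedSpace s := Subtype.preconnectedSpace hs
  set g' : s → ℂ := s.restrict g with hg'
  have hc : Continuous g' := hg.restrict
  have hCeq : {z : s | g' z = g' ⟨x, hx⟩} = g' ⁻¹' (Metric.ball (g' ⟨x, hx⟩) 1) := by
    ext z
    simp only [mem_setOf_eq, Set.mem_preimage, Metric.mem_ball]
    constructor
    · intro h; rw [h]; simpa using one_pos
    · intro h
      exact sep_lemma (h1 z.1 z.2) (h1 x hx) h
  have hclopen : IsClopen {z : s | g' z = g' ⟨x, hx⟩} := by
    constructor
    · exact isClosed_eq hc continuous_const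
    · rw [hCeq]; exact hc.isOpen_preimage _ Metric.isOpen_ball
  rcases isClopen_iff.mp hclopen with h | h
  · exact absurd (by rfl : g' ⟨x, hx⟩ = g' ⟨x, hx⟩) (by
      have : (⟨x, hx⟩ : s) ∉ ({z : s | g' z = g' ⟨x, hx⟩}) := by rw [h]; exact notMem_empty _
      simpa using this)
  · have : (⟨y, hy⟩ : s) ∈ {z : s | g' z = g' ⟨x, hx⟩} := by rw [h]; trivial
    exact (this : g y = g x).symm

-- continuous logarithm on a closed ball
lemma ball_lift {E : Type*} [NormedAddCommGroup E] [NormedSpace ℝ E] [ProperSpace E]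
    {G : E → ℂ} (hG : Continuous G) (hG0 : ∀ x, G x ≠ 0) (R : ℝ) (hR : 0 < R) :
    ∃ γ : E → ℂ, ContinuousOn γ (closedBall 0 R) ∧
      (∀ x ∈ closedBall 0 R, Complex.exp (γ x) = G x) ∧ γ 0 = Complex.log (G 0) := by
  set K : Set E := closedBall 0 R with hK
  have hKc : IsCompact K := isCompact_closedBall 0 R
  have hKne : K.Nonempty := ⟨0, mem_closedBall_self hR.le⟩
  -- minimum of ‖G‖ on K
  obtain ⟨z, hz, hzmin⟩ := hKc.exists_isMinOn hKne (hG.norm.continuousOn)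
  rw [isMinOn_iff] at hzmin
  set m : ℝ := ‖G z‖ with hm
  have hmpos : 0 < m := norm_pos_iff.mpr (hG0 z)
  -- uniform continuity of (t, x) ↦ G (t • x) on [0,1] × K
  set h : ℝ × E → ℂ := fun p => G (p.1 • p.2) with hh
  have hhcont : Continuous h := hG.comp (continuous_fst.smul continuous_snd)
  have hK2 : IsCompact ((Icc (0:ℝ) 1) ×ˢ K) := isCompact_Icc.prod hKc
  have huc := hK2.uniformContinuousOn_of_continuous hhcont.continuousOn
  rw [Metric.uniformContinuousOn_iff] at huc
  obtain ⟨δ, hδpos, hδ⟩ := huc m hmpos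
  obtain ⟨N, hN⟩ := exists_nat_one_div_lt hδpos
  set N' : ℕ := N + 1 with hN'
  have hN'pos : (0:ℝ) < N' := by positivity
  -- membership helper
  have hmemK : ∀ x ∈ K, ∀ t : ℝ, 0 ≤ t → t ≤ 1 → t • x ∈ K := by
    intro x hx t ht0 ht1
    rw [hK, mem_closedBall_zero_iff] at hx ⊢
    calc ‖t • x‖ = |t| * ‖x‖ := by rw [norm_smul, Real.norm_eq_abs]
    _ ≤ 1 * R := by
        apply mul_le_mul (by rwa [_root_.abs_of_nonneg ht0]) hx (norm_nonneg x) zero_le_one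
    _ = R := one_mul R
  have hfrac : ∀ j : ℕ, j ≤ N' → (0:ℝ) ≤ j / N' ∧ (j:ℝ) / N' ≤ 1 := by
    intro j hj
    constructor
    · positivity
    · rw [div_le_one hN'pos]; exact_mod_cast hj
  -- the ratios
  set r : ℕ → E → ℂ := fun j x => G (((j+1 : ℕ) / (N' : ℝ)) • x) / G (((j : ℕ) / (N' : ℝ)) • x)
    with hr
  have hrnz : ∀ j x, r j x ≠ 0 := fun j x => div_ne_zero (hG0 _) (hG0 _)
  have hrclose : ∀ x ∈ K, ∀ j < N', ‖r j x - 1‖ < 1 := by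
    intro x hx j hj
    set a : E := ((j+1 : ℕ) / (N' : ℝ)) • x
    set b : E := ((j : ℕ) / (N' : ℝ)) • x
    have hja := hfrac (j+1) hj
    have hjb := hfrac j hj.le
    have haK : a ∈ K := hmemK x hx _ hja.1 hja.2
    have hbK : b ∈ K := hmemK x hx _ hjb.1 hjb.2
    have hGb : m ≤ ‖G b‖ := hzmin b hbK
    have hdist : dist ((((j+1 : ℕ) : ℝ) / N', x) : ℝ × E) ((((j : ℕ) : ℝ) / N', x)) < δ := by
      rw [Prod.dist_eq]
      simp only [dist_self]
      rw [max_eq_left dist_nonneg]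
      rw [Real.dist_eq]
      have : ((j+1 : ℕ) : ℝ) / N' - ((j:ℕ):ℝ) / N' = 1 / N' := by
        push_cast; ring
      rw [this, abs_of_pos (by positivity)]
      calc (1:ℝ)/N' ≤ 1/(N+1) := by
            apply div_le_div_of_nonneg_left one_pos.le (by positivity)
            simp [hN']
      _ < δ := hN
    have hGab : ‖G a - G b‖ < m := by
      have := hδ (_, x) (mk_mem_prod (by constructor <;> [exact hja.1; exact hja.2] : ((j+1:ℕ):ℝ)/N' ∈ Icc (0:ℝ) 1) hx)
        (_, x) (mk_mem_prod (by constructor <;> [exact hjb.1; exact hjb.2] : ((j:ℕ):ℝ)/N' ∈ Icc (0:ℝ) 1) hx) hdist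
      rw [Complex.dist_eq] at this
      simpa [hh, a, b] using this
    have : r j x - 1 = (G a - G b) / G b := div_sub_one (hG0 _)
    rw [this]
    rw [norm_div]
    rw [div_lt_one (lt_of_lt_of_le hmpos hGb)]
    exact lt_of_lt_of_le hGab hGb
  have hrslit : ∀ x ∈ K, ∀ j < N', r j x ∈ Complex.slitPlane := by
    intro x hx j hj
    rw [Complex.mem_slitPlane_iff]
    left
    have h1 := hrclose x hx j hj
    have : |(r j x - 1).re| ≤ ‖r j x - 1‖ := Complex.abs_re_le_norm _
    have hre : (r j x).re = 1 + (r j x - 1).re := by simp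
    rw [hre]
    have := abs_le.mp this
    linarith [this.1]
  -- the lift
  refine ⟨fun x => Complex.log (G 0) +
    ∑ j ∈ Finset.range N', Complex.log (r j x), ?_, ?_, ?_⟩
  · apply continuousOn_const.add
    apply continuousOn_finset_sum
    intro j hj
    rw [Finset.mem_range] at hj
    apply ContinuousOn.clog
    · exact ContinuousOn.div
        ((hG.comp (continuous_const_smul _)).continuousOn)
        ((hG.comp (continuous_const_smul _)).continuousOn)
        (fun x _ => hG0 _)
    · exact fun x hx => hrslit x hx j hj
  · intro x hx
    have key : ∀ j : ℕ, j ≤ N' →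
        Complex.exp (Complex.log (G 0) + ∑ i ∈ Finset.range j, Complex.log (r i x))
          = G (((j:ℕ) / (N' : ℝ)) • x) := by
      intro j hj
      induction j with
      | zero =>
        simp only [Finset.range_zero, Finset.sum_empty, add_zero]
        rw [Complex.exp_log (hG0 0)]
        norm_num
      | succ k ih =>
        have hk : k ≤ N' := Nat.le_of_succ_le hj
        rw [Finset.sum_range_succ, ← add_assoc, Complex.exp_add, ih hk,
          Complex.exp_log (hrnz k x)]
        rw [hr]
        rw [mul_div_assoc']
        rw [mul_comm]
        exact mul_div_cancel_right₀ _ (hG0 _)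
    have := key N' le_rfl
    rw [div_self (ne_of_gt hN'pos), one_smul] at this
    exact this
  · have : ∀ j ∈ Finset.range N', Complex.log (r j 0) = 0 := by
      intro j _
      rw [hr]
      simp only [smul_zero]
      rw [div_self (hG0 0), Complex.log_one]
    have h2 : (fun x => Complex.log (G 0) + ∑ j ∈ Finset.range N', Complex.log (r j x)) 0
        = Complex.log (G 0) + ∑ j ∈ Finset.range N', Complex.log (r j 0) := rfl
    rw [h2, Finset.sum_congr rfl this]
    simp

-- global continuous logarithm
lemma global_lift {E : Type*} [NormedAddCommGroup E] [NormedSpace ℝ E] [ProperSpace E]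
    {G : E → ℂ} (hG : Continuous G) (hG0 : ∀ x, G x ≠ 0) :
    ∃ γ : E → ℂ, Continuous γ ∧ ∀ x, Complex.exp (γ x) = G x := by
  have hpos : ∀ k : ℕ, (0:ℝ) < (k:ℝ) + 1 := fun k => by positivity
  choose γ hcont hexp hzero using fun k : ℕ => ball_lift hG hG0 ((k:ℝ)+1) (hpos k)
  have key : ∀ j k : ℕ, j ≤ k → ∀ x ∈ closedBall (0:E) ((j:ℝ)+1), γ j x = γ k x := by
    intro j k hjk x hx
    have hjk' : (j:ℝ) ≤ (k:ℝ) := Nat.cast_le.mpr hjk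
    have hsub : closedBall (0:E) ((j:ℝ)+1) ⊆ closedBall 0 ((k:ℝ)+1) :=
      closedBall_subset_closedBall (by linarith)
    have hc : ContinuousOn (fun y => γ j y - γ k y) (closedBall (0:E) ((j:ℝ)+1)) :=
      (hcont j).sub ((hcont k).mono hsub)
    have h1 : ∀ y ∈ closedBall (0:E) ((j:ℝ)+1), Complex.exp (γ j y - γ k y) = 1 := by
      intro y hy
      rw [Complex.exp_sub, hexp j y hy, hexp k y (hsub hy), div_self (hG0 y)]
    have := const_of_exp_eq_one (convex_closedBall (0:E) ((j:ℝ)+1)).isPreconnected hc h1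
      x hx 0 (mem_closedBall_self (by positivity))
    have h0 : γ j 0 - γ k 0 = 0 := by rw [hzero j, hzero k, sub_self]
    rw [h0] at this
    exact sub_eq_zero.mp this
  set Γ : E → ℂ := fun x => γ ⌈‖x‖⌉₊ x with hΓ
  have hΓeq : ∀ k : ℕ, ∀ x ∈ closedBall (0:E) ((k:ℝ)+1), Γ x = γ k x := by
    intro k x hx
    have hxm : x ∈ closedBall (0:E) ((⌈‖x‖⌉₊:ℝ)+1) := by
      rw [mem_closedBall_zero_iff]
      linarith [Nat.le_ceil ‖x‖]
    rcases le_total (⌈‖x‖⌉₊) k with h | h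
    · exact key _ k h x hxm
    · exact (key k _ h x hx).symm
  refine ⟨Γ, ?_, ?_⟩
  · rw [continuous_iff_continuousAt]
    intro x
    set k : ℕ := ⌈‖x‖⌉₊ with hk
    have hxball : x ∈ ball (0:E) ((k:ℝ)+1) := by
      rw [mem_ball_zero_iff]
      linarith [Nat.le_ceil ‖x‖]
    have hnhds : closedBall (0:E) ((k:ℝ)+1) ∈ 𝓝 x :=
      mem_of_superset (isOpen_ball.mem_nhds hxball) ball_subset_closedBall
    have hca : ContinuousAt (γ k) x := (hcont k).continuousAt hnhds
    apply hca.congr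
    exact Filter.eventuallyEq_of_mem (isOpen_ball.mem_nhds hxball)
      (fun y hy => (hΓeq k y (ball_subset_closedBall hy)).symm)
  · intro x
    have hxm : x ∈ closedBall (0:E) ((⌈‖x‖⌉₊:ℝ)+1) := by
      rw [mem_closedBall_zero_iff]
      linarith [Nat.le_ceil ‖x‖]
    rw [hΓeq _ x hxm]
    exact hexp _ x hxm

/-- If `U, V ⊆ ℝⁿ` are open connected sets with `U ∪ V = ℝⁿ`, then `U ∩ V` is connected. -/
theorem inter_connected_of_union_univ (n : ℕ)
    (U V : Set (EuclideanSpace ℝ (Fin n))) (hUo : IsOpen U) (hVo : IsOpen V)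
    (hUc : IsPreconnected U) (hVc : IsPreconnected V) (huv : U ∪ V = Set.univ) :
    IsPreconnected (U ∩ V) := by
  classical
  intro u v hu hv hcov ⟨x₀, hx₀⟩ ⟨x₁, hx₁⟩
  by_contra hne
  rw [Set.not_nonempty_iff_eq_empty] at hne
  -- the separation
  set A : Set (EuclideanSpace ℝ (Fin n)) := (U ∩ V) ∩ u with hA
  set B : Set (EuclideanSpace ℝ (Fin n)) := (U ∩ V) ∩ v with hB
  have hAopen : IsOpen A := ((hUo.inter hVo).inter hu)
  have hBopen : IsOpen B := ((hUo.inter hVo).inter hv)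
  have hdisj : ∀ x, x ∈ A → x ∉ B := by
    intro x hxA hxB
    have : x ∈ U ∩ V ∩ (u ∩ v) := ⟨hxA.1, hxA.2, hxB.2⟩
    rw [hne] at this
    exact this
  have hABun : ∀ x ∈ U ∩ V, x ∈ A ∨ x ∈ B := by
    intro x hx
    rcases hcov hx with h | h
    · exact Or.inl ⟨hx, h⟩
    · exact Or.inr ⟨hx, h⟩
  -- everything in U ∪ V
  have hUV : ∀ x : EuclideanSpace ℝ (Fin n), x ∉ V → x ∈ U := by
    intro x hxV
    have hm : x ∈ U ∪ V := huv ▸ Set.mem_univ x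
    rcases hm with h | h
    · exact h
    · exact absurd h hxV
  have hVU : ∀ x : EuclideanSpace ℝ (Fin n), x ∉ U → x ∈ V := by
    intro x hxU
    have hm : x ∈ U ∪ V := huv ▸ Set.mem_univ x
    rcases hm with h | h
    · exact absurd h hxU
    · exact h
  -- a continuous cutoff: 0 near Vᶜ, 1 near Uᶜ
  obtain ⟨S, hSopen, hScS, hScl⟩ :=
    normal_exists_closure_subset hVo.isClosed_compl hUo (fun x hx => hUV x hx)
  obtain ⟨T, hTopen, hTcT, hTcl⟩ :=
    normal_exists_closure_subset hUo.isClosed_compl isClosed_closure.isOpen_compl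
      (by
        intro x hx
        intro hmem
        exact hx (hScl hmem))
  have hdisjST : Disjoint (closure S) (closure T) :=
    Set.disjoint_left.mpr fun x hxS hxT => hTcl hxT hxS
  obtain ⟨φ, hφ0, hφ1, hφmem⟩ :=
    exists_continuous_zero_one_of_isClosed isClosed_closure isClosed_closure hdisjST
  -- the locally constant separation function
  set f : EuclideanSpace ℝ (Fin n) → ℝ := B.indicator (fun _ => (1:ℝ)) with hf
  have hfA : ∀ y ∈ A, f y = 0 := fun y hy => Set.indicator_of_notMem (hdisj y hy) _
  have hfB : ∀ y ∈ B, f y = 1 := fun y hy => Set.indicator_of_mem hy _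
  have hf01 : ∀ y, f y = 0 ∨ f y = 1 := by
    intro y
    by_cases hy : y ∈ B
    · exact Or.inr (Set.indicator_of_mem hy _)
    · exact Or.inl (Set.indicator_of_notMem hy _)
  have hfC : ∀ x ∈ U ∩ V, ContinuousAt f x := by
    intro x hx
    rcases hABun x hx with h | h
    · apply continuousAt_const.congr
      exact Filter.eventuallyEq_of_mem (hAopen.mem_nhds h) (fun y hy => (hfA y hy).symm)
    · apply continuousAt_const.congr
      exact Filter.eventuallyEq_of_mem (hBopen.mem_nhds h) (fun y hy => (hfB y hy).symm)
  -- the partial functions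
  set θU : EuclideanSpace ℝ (Fin n) → ℝ := fun x => φ x * f x with hθU
  set θV : EuclideanSpace ℝ (Fin n) → ℝ := fun x => (1 - φ x) * f x with hθV
  have hθUc : ∀ x ∈ U, ContinuousAt θU x := by
    intro x hx
    by_cases hxV : x ∈ V
    · exact (φ.continuous.continuousAt).mul (hfC x ⟨hx, hxV⟩)
    · apply ContinuousAt.congr (continuousAt_const : ContinuousAt (fun _ => (0:ℝ)) x)
      apply Filter.eventuallyEq_of_mem (hSopen.mem_nhds (hScS hxV))
      intro y hy
      have h0 : φ y = 0 := hφ0 (subset_closure hy)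
      simp [hθU, h0]
  have hθVc : ∀ x ∈ V, ContinuousAt θV x := by
    intro x hx
    by_cases hxU : x ∈ U
    · exact ((continuous_const.sub φ.continuous).continuousAt).mul (hfC x ⟨hxU, hx⟩)
    · apply ContinuousAt.congr (continuousAt_const : ContinuousAt (fun _ => (0:ℝ)) x)
      apply Filter.eventuallyEq_of_mem (hTopen.mem_nhds (hTcT hxU))
      intro y hy
      have h1 : φ y = 1 := hφ1 (subset_closure hy)
      simp [hθV, h1]
  have hsum : ∀ x ∈ U ∩ V, θU x + θV x = f x := by
    intro x _
    simp only [hθU, hθV]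
    ring
  -- the constant
  set c : ℂ := 2 * (π : ℂ) * Complex.I with hc
  have hcne : c ≠ 0 := by
    simp [hc, Complex.I_ne_zero, Real.pi_ne_zero, Complex.ext_iff]
  have hexpf : ∀ x ∈ U ∩ V, Complex.exp ((f x : ℂ) * c) = 1 := by
    intro x _
    rcases hf01 x with h | h
    · rw [h]; simp
    · rw [h]
      push_cast
      rw [one_mul, hc]
      exact Complex.exp_two_pi_mul_I
  -- the glued circle-valued map
  set G : EuclideanSpace ℝ (Fin n) → ℂ := fun x =>
    if x ∈ U then Complex.exp ((θU x : ℂ) * c) else Complex.exp (-(θV x : ℂ) * c) with hG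
  have hGU : ∀ y ∈ U, G y = Complex.exp ((θU y : ℂ) * c) := by
    intro y hy
    simp only [hG]
    rw [if_pos hy]
  have hGV : ∀ y ∈ V, G y = Complex.exp (-(θV y : ℂ) * c) := by
    intro y hy
    by_cases hyU : y ∈ U
    · rw [hGU y hyU]
      have h1 : θU y = f y - θV y := by
        have := hsum y ⟨hyU, hy⟩; linarith
      have h2 : ((θU y : ℝ) : ℂ) = (f y : ℂ) - (θV y : ℂ) := by
        rw [h1]; push_cast; ring
      rw [h2, sub_mul, Complex.exp_sub, hexpf y ⟨hyU, hy⟩]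
      rw [neg_mul, Complex.exp_neg]
      rw [one_div]
    · simp only [hG]
      rw [if_neg hyU]
  have hG0 : ∀ x, G x ≠ 0 := by
    intro x
    by_cases hxU : x ∈ U
    · rw [hGU x hxU]; exact Complex.exp_ne_zero _
    · rw [hGV x (hVU x hxU)]; exact Complex.exp_ne_zero _
  have hGcont : Continuous G := by
    rw [continuous_iff_continuousAt]
    intro x
    by_cases hxU : x ∈ U
    · have h1 : ContinuousAt (fun y => Complex.exp ((θU y : ℂ) * c)) x :=
        Complex.continuous_exp.continuousAt.comp
          (((Complex.continuous_ofReal.continuousAt).comp (hθUc x hxU)).mul continuousAt_const)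
      apply h1.congr
      exact Filter.eventuallyEq_of_mem (hUo.mem_nhds hxU) (fun y hy => (hGU y hy).symm)
    · have hxV : x ∈ V := hVU x hxU
      have h1 : ContinuousAt (fun y => Complex.exp (-(θV y : ℂ) * c)) x :=
        Complex.continuous_exp.continuousAt.comp
          ((((Complex.continuous_ofReal.continuousAt).comp (hθVc x hxV)).neg).mul
            continuousAt_const)
      apply h1.congr
      exact Filter.eventuallyEq_of_mem (hVo.mem_nhds hxV) (fun y hy => (hGV y hy).symm)
  -- the global logarithm
  obtain ⟨γ, hγc, hγe⟩ := global_lift hGcont hG0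
  -- constancy on U
  have hθUcon : ContinuousOn (fun y => γ y - (θU y : ℂ) * c) U := by
    intro y hy
    exact ((hγc.continuousAt).sub
      ((Complex.continuous_ofReal.continuousAt.comp (hθUc y hy)).mul
        continuousAt_const)).continuousWithinAt
  have hexpU : ∀ y ∈ U, Complex.exp (γ y - (θU y : ℂ) * c) = 1 := by
    intro y hy
    rw [Complex.exp_sub, hγe y, hGU y hy, div_self (Complex.exp_ne_zero _)]
  have hδU := const_of_exp_eq_one hUc hθUcon hexpU x₀ hx₀.1.1 x₁ hx₁.1.1
  -- constancy on V
  have hθVcon : ContinuousOn (fun y => γ y + (θV y : ℂ) * c) V := by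
    intro y hy
    exact ((hγc.continuousAt).add
      ((Complex.continuous_ofReal.continuousAt.comp (hθVc y hy)).mul
        continuousAt_const)).continuousWithinAt
  have hexpV : ∀ y ∈ V, Complex.exp (γ y + (θV y : ℂ) * c) = 1 := by
    intro y hy
    rw [Complex.exp_add, hγe y, hGV y hy, ← Complex.exp_add]
    rw [show -(θV y : ℂ) * c + (θV y : ℂ) * c = 0 by ring, Complex.exp_zero]
  have hδV := const_of_exp_eq_one hVc hθVcon hexpV x₀ hx₀.1.2 x₁ hx₁.1.2
  -- combine
  have hkey : ((θU x₀ + θV x₀ : ℝ) : ℂ) * c = ((θU x₁ + θV x₁ : ℝ) : ℂ) * c := by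
    push_cast
    linear_combination hδV - hδU
  rw [hsum x₀ ⟨hx₀.1.1, hx₀.1.2⟩, hsum x₁ ⟨hx₁.1.1, hx₁.1.2⟩] at hkey
  rw [hfA x₀ hx₀, hfB x₁ hx₁] at hkey
  push_cast at hkey
  rw [zero_mul, one_mul] at hkey
  exact hcne hkey.symm
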